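/- Substituting distinct fresh names commutes with normalisation: if M is a microCCS term with variables among {Xᵢ}ᵢ∈I and {aᵢ}ᵢ∈I are pairwise distinct names not occurring in M, then ⌊M{aᵢ.0/Xᵢ}⌋ ≡ ⌊M⌋{aᵢ.0/Xᵢ}. -/

import Mathlib

/-- CCS visible actions: a name `a` or a coname `ā`. -/
inductive Act where
  | inp : ℕ → Act
  | out : ℕ → Act
deriving DecidableEq

/-- The coaction. -/
def Act.co : Act → Act
  | .inp a => .out a
  | .out a => .inp a

/-- MicroCCS processes: nil, prefix, parallel composition. -/
inductive Proc where
  | nil : Proc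
  | pre : Act → Proc → Proc
  | par : Proc → Proc → Proc
deriving DecidableEq

/-- Transition labels: a visible action or τ. -/
inductive Lab where
  | act : Act → Lab
  | tau : Lab
deriving DecidableEq

/-- The standard CCS labelled transition system on microCCS. -/
inductive Step : Proc → Lab → Proc → Prop where
  | pre (η : Act) (P : Proc) : Step (.pre η P) (.act η) P
  | syn {P P' Q Q' : Proc} {η : Act} :
      Step P (.act η) P' → Step Q (.act η.co) Q' →
      Step (.par P Q) .tau (.par P' Q')
  | parL {P P' : Proc} {μ : Lab} (Q : Proc) :
      Step P μ P' → Step (.par P Q) μ (.par P' Q)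
  | parR {Q Q' : Proc} {μ : Lab} (P : Proc) :
      Step Q μ Q' → Step (.par P Q) μ (.par P Q')

/-- A (symmetric) bisimulation. -/
def IsBisim (R : Proc → Proc → Prop) : Prop :=
  (∀ P Q, R P Q → R Q P) ∧
  ∀ P Q μ P', R P Q → Step P μ P' → ∃ Q', Step Q μ Q' ∧ R P' Q'

/-- Strong bisimilarity: the union of all bisimulations. -/
def Bisim (P Q : Proc) : Prop := ∃ R, IsBisim R ∧ R P Q

/-- The size of a process: its number of prefixes. -/
def Proc.size : Proc → ℕ
  | .nil => 0
  | .pre _ P => 1 + P.size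
  | .par P Q => P.size + Q.size

/-- Structural congruence: abelian monoid laws for parallel composition. -/
inductive SC : Proc → Proc → Prop where
  | refl (P) : SC P P
  | symm : SC P Q → SC Q P
  | trans : SC P Q → SC Q R → SC P R
  | comm (P Q) : SC (.par P Q) (.par Q P)
  | assoc (P Q R) : SC (.par P (.par Q R)) (.par (.par P Q) R)
  | unit (P) : SC (.par P .nil) P
  | pre (η) : SC P Q → SC (.pre η P) (.pre η Q)
  | par : SC P P' → SC Q Q' → SC (.par P Q) (.par P' Q')

/-- `pow P k` is the k-fold parallel composition of `P`. -/
def pow (P : Proc) : ℕ → Proc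
  | 0 => .nil
  | n+1 => .par P (pow P n)

/-- One step of rewriting with the distribution law
    `η.(P ‖ (η.P)^k) ⇝ (η.P)^{k+1}` (k ≥ 1), modulo structural
    congruence, in any context. -/
inductive RW : Proc → Proc → Prop where
  | head {η : Act} {P : Proc} {k : ℕ} (hk : 1 ≤ k) :
      RW (.pre η (.par P (pow (.pre η P) k))) (pow (.pre η P) (k+1))
  | pre (η) : RW P P' → RW (.pre η P) (.pre η P')
  | parL (Q) : RW P P' → RW (.par P Q) (.par P' Q)
  | parR (P) : RW Q Q' → RW (.par P Q) (.par P Q')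
  | congr : SC P P₁ → RW P₁ P₂ → SC P₂ P' → RW P P'

/-- Reflexive-transitive closure of the distribution rewriting. -/
def Rws : Proc → Proc → Prop := Relation.ReflTransGen RW

/-- Normal forms for the distribution rewriting. -/
def NF (P : Proc) : Prop := ¬ ∃ P', RW P P'

/-- Prime processes. -/
def IsPrime (P : Proc) : Prop :=
  ¬ Bisim P .nil ∧ ∀ Q R, Bisim P (.par Q R) → Bisim Q .nil ∨ Bisim R .nil

/-- MicroCCS terms with variables. -/
inductive Tm where
  | nil : Tm
  | pre : Act → Tm → Tm
  | par : Tm → Tm → Tm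
  | var : ℕ → Tm
deriving DecidableEq

/-- Instantiation of a term by a ground instantiation (mapping variables
    to processes). -/
def inst (σ : ℕ → Proc) : Tm → Proc
  | .nil => .nil
  | .pre η M => .pre η (inst σ M)
  | .par M N => .par (inst σ M) (inst σ N)
  | .var x => σ x

/-- The variables occurring in a term. -/
def tmVars : Tm → Set ℕ
  | .nil => ∅
  | .pre _ M => tmVars M
  | .par M N => tmVars M ∪ tmVars N
  | .var x => {x}

/-- The underlying name of an action. -/
def Act.name : Act → ℕ
  | .inp a => a
  | .out a => a

/-- The names occurring in a term. -/
def tmNames : Tm → Set ℕ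
  | .nil => ∅
  | .pre η M => {η.name} ∪ tmNames M
  | .par M N => tmNames M ∪ tmNames N
  | .var _ => ∅

/-- k-fold parallel composition of a term. -/
def tpow (M : Tm) : ℕ → Tm
  | 0 => .nil
  | n+1 => .par M (tpow M n)

/-- Structural congruence on terms. -/
inductive TmSC : Tm → Tm → Prop where
  | refl (M) : TmSC M M
  | symm : TmSC M N → TmSC N M
  | trans : TmSC M N → TmSC N K → TmSC M K
  | comm (M N) : TmSC (.par M N) (.par N M)
  | assoc (M N K) : TmSC (.par M (.par N K)) (.par (.par M N) K)
  | unit (M) : TmSC (.par M .nil) M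
  | pre (η) : TmSC M N → TmSC (.pre η M) (.pre η N)
  | par : TmSC M M' → TmSC N N' → TmSC (.par M N) (.par M' N')

/-- Distribution-law rewriting on terms, modulo structural congruence. -/
inductive TmRW : Tm → Tm → Prop where
  | head {η : Act} {M : Tm} {k : ℕ} (hk : 1 ≤ k) :
      TmRW (.pre η (.par M (tpow (.pre η M) k))) (tpow (.pre η M) (k+1))
  | pre (η) : TmRW M M' → TmRW (.pre η M) (.pre η M')
  | parL (N) : TmRW M M' → TmRW (.par M N) (.par M' N)
  | parR (M) : TmRW N N' → TmRW (.par M N) (.par M N')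
  | congr : TmSC M M₁ → TmRW M₁ M₂ → TmSC M₂ M' → TmRW M M'

def TmRws : Tm → Tm → Prop := Relation.ReflTransGen TmRW

def TmNF (M : Tm) : Prop := ¬ ∃ M', TmRW M M'


/-! ### Auxiliary development: encoding of structural congruence classes -/

def Act.enc : Act → ℕ
  | .inp a => 2 * a
  | .out a => 2 * a + 1

lemma Act.enc_inj {η η' : Act} (h : η.enc = η'.enc) : η = η' := by
  cases η <;> cases η' <;> simp_all [Act.enc] <;> omega

/-- Multiset code of a process: the multiset of codes of its parallel
components, where a component `η.B` is coded by pairing the code of `η`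
with the code of the multiset code of `B`. -/
def mcode : Proc → Multiset ℕ
  | .nil => 0
  | .pre η P => {Nat.pair η.enc (Encodable.encode (mcode P))}
  | .par P Q => mcode P + mcode Q

/-- Code of a single (prefix-shaped) component. -/
def cdP : Proc → ℕ
  | .pre η P => Nat.pair η.enc (Encodable.encode (mcode P))
  | _ => 0

lemma mcode_pre (η : Act) (P : Proc) : mcode (.pre η P) = {cdP (.pre η P)} := rfl

lemma cdP_inj {η η' : Act} {P P' : Proc}
    (h : cdP (.pre η P) = cdP (.pre η' P')) : η = η' ∧ mcode P = mcode P' := by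
  simp only [cdP, Nat.pair_eq_pair] at h
  exact ⟨Act.enc_inj h.1, Encodable.encode_injective h.2⟩

lemma sc_mcode {P Q : Proc} (h : SC P Q) : mcode P = mcode Q := by
  induction h with
  | refl => rfl
  | symm _ ih => exact ih.symm
  | trans _ _ ih1 ih2 => exact ih1.trans ih2
  | comm P Q => exact add_comm _ _
  | assoc P Q R => exact (add_assoc _ _ _).symm
  | unit P => exact add_zero _
  | pre η _ ih => simp [mcode, ih]
  | par _ _ ih1 ih2 => simp [mcode, ih1, ih2]

lemma sc_size {P Q : Proc} (h : SC P Q) : P.size = Q.size := by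
  induction h with
  | refl => rfl
  | symm _ ih => exact ih.symm
  | trans _ _ ih1 ih2 => exact ih1.trans ih2
  | comm P Q => simp [Proc.size]; omega
  | assoc P Q R => simp [Proc.size]; omega
  | unit P => simp [Proc.size]
  | pre η _ ih => simp [Proc.size, ih]
  | par _ _ ih1 ih2 => simp [Proc.size, ih1, ih2]

/-- The list of parallel components of a process. -/
def comps : Proc → List Proc
  | .nil => []
  | .pre η P => [.pre η P]
  | .par P Q => comps P ++ comps Q

def build : List Proc → Proc
  | [] => .nil
  | c :: l => .par c (build l)

lemma comps_shape {P Y : Proc} (h : Y ∈ comps P) : ∃ η B, Y = .pre η B := by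
  induction P with
  | nil => simp [comps] at h
  | pre η B _ => simp [comps] at h; exact ⟨η, B, h⟩
  | par P Q ih1 ih2 =>
      simp only [comps, List.mem_append] at h
      rcases h with h | h
      exacts [ih1 h, ih2 h]

lemma comps_size_le {P Y : Proc} (h : Y ∈ comps P) : Y.size ≤ P.size := by
  induction P with
  | nil => simp [comps] at h
  | pre η B _ => simp [comps] at h; subst h; exact le_rfl
  | par P Q ih1 ih2 =>
      simp only [comps, List.mem_append] at h
      rcases h with h | h
      · exact (ih1 h).trans (by simp [Proc.size])
      · exact (ih2 h).trans (by simp [Proc.size])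

lemma build_append (l₁ l₂ : List Proc) :
    SC (build (l₁ ++ l₂)) (.par (build l₁) (build l₂)) := by
  induction l₁ with
  | nil =>
      exact (SC.unit (build l₂)).symm.trans (SC.comm _ _)
  | cons c l ih =>
      exact ((SC.par (SC.refl c) ih).trans (SC.assoc _ _ _))

lemma sc_build_comps (P : Proc) : SC P (build (comps P)) := by
  induction P with
  | nil => exact SC.refl _
  | pre η B _ => exact (SC.unit _).symm
  | par P Q ih1 ih2 =>
      exact (SC.par ih1 ih2).trans (build_append _ _).symm

lemma build_perm {l l' : List Proc} (h : l.Perm l') : SC (build l) (build l') := by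
  induction h with
  | nil => exact SC.refl _
  | cons x _ ih => exact SC.par (SC.refl x) ih
  | swap x y t =>
      exact ((SC.assoc _ _ _).trans
        (SC.par (SC.comm _ _) (SC.refl (build t)))).trans (SC.assoc _ _ _).symm
  | trans _ _ ih1 ih2 => exact ih1.trans ih2

lemma mcode_build {l : List Proc} (h : ∀ Y ∈ l, ∃ η B, Y = Proc.pre η B) :
    mcode (build l) = (l.map cdP : Multiset ℕ) := by
  induction l with
  | nil => simp [build, mcode]
  | cons Y l ih =>
      obtain ⟨η, B, rfl⟩ := h Y (List.mem_cons_self)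
      have := ih (fun Z hZ => h Z (List.mem_cons_of_mem _ hZ))
      simp [build, mcode, this, cdP]

lemma mcode_comps (P : Proc) : mcode P = ((comps P).map cdP : Multiset ℕ) := by
  rw [sc_mcode (sc_build_comps P)]
  exact mcode_build (fun Y hY => comps_shape hY)

lemma build_sc_aux : ∀ (l₁ l₂ : List Proc),
    (∀ Y ∈ l₁, ∀ Z ∈ l₂, cdP Y = cdP Z → SC Y Z) →
    ((l₁.map cdP : Multiset ℕ) = (l₂.map cdP : Multiset ℕ)) →
    SC (build l₁) (build l₂) := by
  intro l₁
  induction l₁ with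
  | nil =>
      intro l₂ _ h
      cases l₂ with
      | nil => exact SC.refl _
      | cons a t =>
          have := Multiset.coe_eq_coe.mp h
          simp [List.nil_perm] at this
  | cons Y l ih =>
      intro l₂ hrel h
      have hY : cdP Y ∈ l₂.map cdP := by
        have h1 : cdP Y ∈ ((Y :: l).map cdP : Multiset ℕ) := by simp
        rw [h] at h1
        exact_mod_cast h1
      obtain ⟨Z, hZ, hcd⟩ := List.mem_map.mp hY
      have hperm : l₂.Perm (Z :: l₂.erase Z) := List.perm_cons_erase hZ
      have h2 : ((l.map cdP : Multiset ℕ)) = (((l₂.erase Z).map cdP : Multiset ℕ)) := by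
        have h3 : ((Y :: l).map cdP : Multiset ℕ) = (((Z :: l₂.erase Z)).map cdP : Multiset ℕ) := by
          rw [h]
          exact_mod_cast Multiset.coe_eq_coe.mpr (hperm.map cdP)
        simp only [List.map_cons, Multiset.cons_coe] at h3
        rw [hcd.symm] at h3
        exact (Multiset.cons_inj_right _).mp h3
      have hsc : SC (build l) (build (l₂.erase Z)) :=
        ih _ (fun Y' hY' Z' hZ' => hrel Y' (List.mem_cons_of_mem _ hY') Z'
          (List.mem_of_mem_erase hZ')) h2
      have hYZ : SC Y Z := hrel Y (List.mem_cons_self) Z hZ hcd.symm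
      exact (SC.par hYZ hsc).trans (build_perm hperm).symm

lemma size_zero_comps {P : Proc} (h : P.size = 0) : comps P = [] := by
  induction P with
  | nil => rfl
  | pre η B _ => simp only [Proc.size] at h; omega
  | par P Q ih1 ih2 =>
      simp only [Proc.size, Nat.add_eq_zero] at h
      simp [comps, ih1 h.1, ih2 h.2]

lemma m_sc_aux : ∀ (n : ℕ) (P Q : Proc), P.size ≤ n → mcode P = mcode Q → SC P Q := by
  intro n
  induction n with
  | zero =>
      intro P Q hs h
      have hP : comps P = [] := size_zero_comps (Nat.le_zero.mp hs)
      have h0 : mcode P = 0 := by rw [mcode_comps, hP]; rfl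
      have h2 : ((comps Q).map cdP : Multiset ℕ) = 0 := by
        rw [← mcode_comps, ← h, h0]
      have hQ : comps Q = [] := by
        cases hq : comps Q with
        | nil => rfl
        | cons a t => rw [hq] at h2; simp at h2
      have s1 : SC P .nil := by
        have := sc_build_comps P; rw [hP] at this; exact this
      have s2 : SC Q .nil := by
        have := sc_build_comps Q; rw [hQ] at this; exact this
      exact s1.trans s2.symm
  | succ n ih =>
      intro P Q hs h
      refine ((sc_build_comps P).trans ?_).trans (sc_build_comps Q).symm
      apply build_sc_aux
      · intro Y hY Z hZ hcd
        obtain ⟨η, B, rfl⟩ := comps_shape hY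
        obtain ⟨η', B', rfl⟩ := comps_shape hZ
        obtain ⟨rfl, hm⟩ := cdP_inj hcd
        refine SC.pre _ (ih B B' ?_ hm)
        have := comps_size_le hY
        simp only [Proc.size] at this
        omega
      · rw [← mcode_comps, ← mcode_comps]; exact h

lemma m_sc {P Q : Proc} (h : mcode P = mcode Q) : SC P Q :=
  m_sc_aux P.size P Q le_rfl h

lemma sc_iff_mcode {P Q : Proc} : SC P Q ↔ mcode P = mcode Q :=
  ⟨sc_mcode, m_sc⟩



/-! ### Weights, termination, saturated rewriting -/

lemma mcode_pow (D : Proc) (n : ℕ) : mcode (pow D n) = n • mcode D := by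
  induction n with
  | zero => simp [pow, mcode]
  | succ n ih =>
      show mcode D + mcode (pow D n) = (n + 1) • mcode D
      rw [ih, succ_nsmul, add_comm]

lemma size_pow (D : Proc) (n : ℕ) : (pow D n).size = n * D.size := by
  induction n with
  | zero => simp [pow, Proc.size]
  | succ n ih => show D.size + (pow D n).size = _; rw [ih]; ring

def wgt : Proc → ℕ
  | .nil => 0
  | .pre _ P => P.size + wgt P
  | .par P Q => wgt P + wgt Q

lemma wgt_pow (D : Proc) (n : ℕ) : wgt (pow D n) = n * wgt D := by
  induction n with
  | zero => simp [pow, wgt]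
  | succ n ih => show wgt D + wgt (pow D n) = _; rw [ih]; ring

lemma sc_wgt {P Q : Proc} (h : SC P Q) : wgt P = wgt Q := by
  induction h with
  | refl => rfl
  | symm _ ih => exact ih.symm
  | trans _ _ ih1 ih2 => exact ih1.trans ih2
  | comm P Q => simp [wgt]; omega
  | assoc P Q R => simp [wgt]; omega
  | unit P => simp [wgt]
  | pre η hPQ ih => simp [wgt, ih, sc_size hPQ]
  | par _ _ ih1 ih2 => simp [wgt, ih1, ih2]

lemma rw_size {P Q : Proc} (h : RW P Q) : P.size = Q.size := by
  induction h with
  | head hk => simp [Proc.size, size_pow]; ring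
  | pre η _ ih => simp [Proc.size, ih]
  | parL Q _ ih => simp [Proc.size, ih]
  | parR P _ ih => simp [Proc.size, ih]
  | congr h1 _ h2 ih => rw [sc_size h1, ih, sc_size h2]

lemma rw_wgt {P Q : Proc} (h : RW P Q) : wgt Q < wgt P := by
  induction h with
  | head hk =>
      rename_i η R k
      simp only [wgt, Proc.size, size_pow, wgt_pow]
      nlinarith [hk]
  | pre η hrw ih =>
      have := rw_size hrw
      simp only [wgt]; omega
  | parL Q _ ih => simp only [wgt]; omega
  | parR P _ ih => simp only [wgt]; omega
  | congr h1 _ h2 ih => rw [sc_wgt h1, ← sc_wgt h2]; exact ih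

lemma rws_pre {B B' : Proc} (η : Act) (h : Rws B B') : Rws (.pre η B) (.pre η B') := by
  induction h with
  | refl => exact Relation.ReflTransGen.refl
  | tail _ h ih => exact ih.tail (RW.pre η h)

lemma rws_parL {P P' : Proc} (Q : Proc) (h : Rws P P') : Rws (.par P Q) (.par P' Q) := by
  induction h with
  | refl => exact Relation.ReflTransGen.refl
  | tail _ h ih => exact ih.tail (RW.parL Q h)

lemma rws_parR {Q Q' : Proc} (P : Proc) (h : Rws Q Q') : Rws (.par P Q) (.par P Q') := by
  induction h with
  | refl => exact Relation.ReflTransGen.refl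
  | tail _ h ih => exact ih.tail (RW.parR P h)

lemma rws_par {P P' Q Q' : Proc} (h1 : Rws P P') (h2 : Rws Q Q') :
    Rws (.par P Q) (.par P' Q') :=
  Relation.ReflTransGen.trans (rws_parL Q h1) (rws_parR P' h2)

lemma rws_pow {D D' : Proc} (n : ℕ) (h : Rws D D') : Rws (pow D n) (pow D' n) := by
  induction n with
  | zero => exact Relation.ReflTransGen.refl
  | succ n ih => exact rws_par h ih

lemma rws_wgt_le {P Q : Proc} (h : Rws P Q) : wgt Q ≤ wgt P := by
  induction h with
  | refl => exact le_rfl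
  | tail _ h ih => exact (rw_wgt h).le.trans ih

/-- `RwsSC P Q`: `P` rewrites in several steps to something structurally
congruent to `Q`. -/
def RwsSC (P Q : Proc) : Prop := ∃ Q', Rws P Q' ∧ SC Q' Q

lemma rws_of_sc {X Y Z : Proc} (h : SC Y X) (hr : Rws X Z) :
    ∃ Z', Rws Y Z' ∧ SC Z' Z := by
  rcases hr.cases_head with rfl | ⟨W, h1, h2⟩
  · exact ⟨Y, Relation.ReflTransGen.refl, h⟩
  · exact ⟨Z, Relation.ReflTransGen.head (RW.congr h h1 (SC.refl _)) h2, SC.refl _⟩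

lemma rwsSC_of {A A₂ C₂ C : Proc} (h1 : SC A A₂) (h2 : Rws A₂ C₂) (h3 : SC C₂ C) :
    RwsSC A C := by
  obtain ⟨Z', hz, hsc⟩ := rws_of_sc h1 h2
  exact ⟨Z', hz, hsc.trans h3⟩

/-- Saturated form of the rewriting relation: a redex among the parallel
components is contracted, or a rewrite happens inside the body of a
component. -/
inductive SRW2 : Proc → Proc → Prop where
  | red {P Q : Proc} (η : Act) (R S : Proc) (k : ℕ) (hk : 1 ≤ k) :
      SC P (.par (.pre η (.par R (pow (.pre η R) k))) S) →
      SC Q (.par (pow (.pre η R) (k+1)) S) → SRW2 P Q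
  | comp {P Q : Proc} (η : Act) (B B' S : Proc) :
      SRW2 B B' → SC P (.par (.pre η B) S) → SC Q (.par (.pre η B') S) → SRW2 P Q

lemma srw2_sc {P₀ P Q Q₀ : Proc} (h1 : SC P₀ P) (h : SRW2 P Q) (h2 : SC Q Q₀) :
    SRW2 P₀ Q₀ := by
  cases h with
  | red η R S k hk ha hb => exact .red η R S k hk (h1.trans ha) (h2.symm.trans hb)
  | comp η B B' S hB ha hb => exact .comp η B B' S hB (h1.trans ha) (h2.symm.trans hb)

lemma srw2_par {P P' : Proc} (S₀ : Proc) (h : SRW2 P P') : SRW2 (.par P S₀) (.par P' S₀) := by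
  cases h with
  | red η R S k hk ha hb =>
      refine .red η R (.par S S₀) k hk ?_ ?_
      · apply m_sc; simp only [mcode, sc_mcode ha]; abel
      · apply m_sc; simp only [mcode, sc_mcode hb]; abel
  | comp η B B' S hB ha hb =>
      refine .comp η B B' (.par S S₀) hB ?_ ?_
      · apply m_sc; simp only [mcode, sc_mcode ha]; abel
      · apply m_sc; simp only [mcode, sc_mcode hb]; abel

lemma rw_srw2 {P Q : Proc} (h : RW P Q) : SRW2 P Q := by
  induction h with
  | head hk =>
      rename_i η R k
      exact .red η R .nil k hk (SC.unit _).symm (SC.unit _).symm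
  | pre η hr ih =>
      rename_i B B'
      exact .comp η B B' .nil ih (SC.unit _).symm (SC.unit _).symm
  | parL S hr ih => exact srw2_par S ih
  | parR P hr ih => exact srw2_sc (SC.comm _ _) (srw2_par P ih) (SC.comm _ _)
  | congr h1 hr h2 ih => exact srw2_sc h1 ih h2

lemma srw2_rw {P Q : Proc} (h : SRW2 P Q) : RW P Q := by
  induction h with
  | red η R S k hk ha hb => exact RW.congr ha (RW.parL S (RW.head hk)) hb.symm
  | comp η B B' S _ ha hb ih => exact RW.congr ha (RW.parL S (RW.pre η ih)) hb.symm

lemma srw2_mcode_ne {P Q : Proc} (h : SRW2 P Q) : mcode P ≠ 0 := by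
  cases h with
  | red η R S k hk ha _ =>
      rw [sc_mcode ha]
      simp [mcode, Multiset.singleton_add]
  | comp η B B' S _ ha _ =>
      rw [sc_mcode ha]
      simp [mcode, Multiset.singleton_add]

lemma sc_split {S : Proc} {c : ℕ} (hc : c ∈ mcode S) :
    ∃ η B W, SC S (.par (.pre η B) W) ∧ cdP (.pre η B) = c ∧ mcode S = c ::ₘ mcode W := by
  rw [mcode_comps] at hc
  have hc' : c ∈ (comps S).map cdP := by exact_mod_cast hc
  obtain ⟨Y, hY, hcd⟩ := List.mem_map.mp hc'
  obtain ⟨η, B, rfl⟩ := comps_shape hY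
  have hperm := List.perm_cons_erase hY
  refine ⟨η, B, build ((comps S).erase (Proc.pre η B)), ?_, hcd, ?_⟩
  · exact (sc_build_comps S).trans (build_perm hperm)
  · rw [mcode_comps, mcode_build (fun Z hZ => comps_shape (List.mem_of_mem_erase hZ)), ← hcd]
    have := Multiset.coe_eq_coe.mpr (hperm.map cdP)
    simpa using this

lemma mem_mcode_size {R : Proc} {η' : Act} {R' : Proc}
    (h : cdP (.pre η' R') ∈ mcode R) : R'.size + 1 ≤ R.size := by
  obtain ⟨η, B, W, hsc, hcd, _⟩ := sc_split h
  obtain ⟨rfl, hm⟩ := cdP_inj hcd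
  have h1 := sc_size hsc
  have h2 := sc_size (m_sc hm)
  simp only [Proc.size] at h1
  omega


/-! ### Locating a rewrite inside a parallel decomposition -/

lemma cons_cancel {a : ℕ} {s t : Multiset ℕ} (h : a ::ₘ s = a ::ₘ t) : s = t :=
  (Multiset.cons_inj_right _).mp h

lemma srw2_split {U V R W : Proc} (h : SRW2 U V) (hU : SC U (.par R W)) :
    (∃ R', SRW2 R R' ∧ SC V (.par R' W)) ∨ (∃ W', SRW2 W W' ∧ SC V (.par R W')) := by
  cases h with
  | red η R₀ S k hk ha hb =>
      have hm : mcode R + mcode W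
          = cdP (.pre η (.par R₀ (pow (.pre η R₀) k))) ::ₘ mcode S := by
        have := sc_mcode (hU.symm.trans ha)
        simpa [mcode, cdP, Multiset.singleton_add] using this
      have hcm : cdP (.pre η (.par R₀ (pow (.pre η R₀) k))) ∈ mcode R + mcode W := by
        rw [hm]; exact Multiset.mem_cons_self _ _
      rcases Multiset.mem_add.mp hcm with hcR | hcW
      · obtain ⟨η₂, B₂, W₂, hsc, hcd, hmR⟩ := sc_split hcR
        obtain ⟨heq, hm₂⟩ := cdP_inj hcd
        subst heq
        have h6 : mcode S = mcode W₂ + mcode W := by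
          apply cons_cancel (a := cdP (.pre η₂ (.par R₀ (pow (.pre η₂ R₀) k))))
          rw [← hm, hmR, Multiset.cons_add]
        refine Or.inl ⟨.par (pow (.pre η₂ R₀) (k+1)) W₂, ?_, ?_⟩
        · exact .red η₂ R₀ W₂ k hk
            (hsc.trans (SC.par (SC.pre _ (m_sc hm₂)) (SC.refl _))) (SC.refl _)
        · apply m_sc
          rw [sc_mcode hb]
          simp only [mcode, h6]
          abel
      · obtain ⟨η₂, B₂, W₂, hsc, hcd, hmW⟩ := sc_split hcW
        obtain ⟨heq, hm₂⟩ := cdP_inj hcd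
        subst heq
        have h6 : mcode S = mcode R + mcode W₂ := by
          apply cons_cancel (a := cdP (.pre η₂ (.par R₀ (pow (.pre η₂ R₀) k))))
          rw [← hm, hmW, ← Multiset.singleton_add, ← Multiset.singleton_add]
          abel
        refine Or.inr ⟨.par (pow (.pre η₂ R₀) (k+1)) W₂, ?_, ?_⟩
        · exact .red η₂ R₀ W₂ k hk
            (hsc.trans (SC.par (SC.pre _ (m_sc hm₂)) (SC.refl _))) (SC.refl _)
        · apply m_sc
          rw [sc_mcode hb]
          simp only [mcode, h6]
          abel
  | comp η B B' S hB ha hb =>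
      have hm : mcode R + mcode W = cdP (.pre η B) ::ₘ mcode S := by
        have := sc_mcode (hU.symm.trans ha)
        simpa [mcode, cdP, Multiset.singleton_add] using this
      have hcm : cdP (.pre η B) ∈ mcode R + mcode W := by
        rw [hm]; exact Multiset.mem_cons_self _ _
      rcases Multiset.mem_add.mp hcm with hcR | hcW
      · obtain ⟨η₂, B₂, W₂, hsc, hcd, hmR⟩ := sc_split hcR
        obtain ⟨heq, hm₂⟩ := cdP_inj hcd
        subst heq
        have h6 : mcode S = mcode W₂ + mcode W := by
          apply cons_cancel (a := cdP (.pre η₂ B))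
          rw [← hm, hmR, Multiset.cons_add]
        refine Or.inl ⟨.par (.pre η₂ B') W₂, ?_, ?_⟩
        · exact .comp η₂ B₂ B' W₂ (srw2_sc (m_sc hm₂) hB (SC.refl _)) hsc (SC.refl _)
        · apply m_sc
          rw [sc_mcode hb]
          simp only [mcode, h6]
          abel
      · obtain ⟨η₂, B₂, W₂, hsc, hcd, hmW⟩ := sc_split hcW
        obtain ⟨heq, hm₂⟩ := cdP_inj hcd
        subst heq
        have h6 : mcode S = mcode R + mcode W₂ := by
          apply cons_cancel (a := cdP (.pre η₂ B))
          rw [← hm, hmW, ← Multiset.singleton_add, ← Multiset.singleton_add]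
          abel
        refine Or.inr ⟨.par (.pre η₂ B') W₂, ?_, ?_⟩
        · exact .comp η₂ B₂ B' W₂ (srw2_sc (m_sc hm₂) hB (SC.refl _)) hsc (SC.refl _)
        · apply m_sc
          rw [sc_mcode hb]
          simp only [mcode, h6]
          abel

lemma srw2_pre_split {U V : Proc} {η : Act} {B : Proc} (h : SRW2 U V)
    (hU : SC U (.pre η B)) :
    (∃ B₂, SRW2 B B₂ ∧ SC V (.pre η B₂)) ∨
    (∃ R k, 1 ≤ k ∧ SC B (.par R (pow (.pre η R) k)) ∧ SC V (pow (.pre η R) (k+1))) := by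
  cases h with
  | red η' R S k hk ha hb =>
      have h0 := sc_mcode (hU.symm.trans ha)
      have h2 : (η.enc = η'.enc ∧ mcode B = mcode R + mcode (pow (Proc.pre η' R) k))
          ∧ mcode S = 0 := by
        simpa [mcode, Multiset.singleton_add] using h0
      obtain ⟨⟨henc, hmB⟩, hS0⟩ := h2
      obtain rfl : η = η' := Act.enc_inj henc
      refine Or.inr ⟨R, k, hk, ?_, ?_⟩
      · apply m_sc; simpa [mcode] using hmB
      · apply m_sc
        rw [sc_mcode hb]
        simp [mcode, hS0]
  | comp η' B₀ B₀' S hB ha hb =>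
      have h0 := sc_mcode (hU.symm.trans ha)
      have h2 : (η.enc = η'.enc ∧ mcode B = mcode B₀) ∧ mcode S = 0 := by
        simpa [mcode, Multiset.singleton_add] using h0
      obtain ⟨⟨henc, hmB⟩, hS0⟩ := h2
      obtain rfl : η = η' := Act.enc_inj henc
      refine Or.inl ⟨B₀', srw2_sc (m_sc hmB) hB (SC.refl _), ?_⟩
      apply m_sc
      rw [sc_mcode hb]
      simp [mcode, hS0]

lemma srw2_pow {D : Proc} : ∀ (k : ℕ) (W : Proc), SRW2 (pow D k) W →
    ∃ D', SRW2 D D' ∧ SC W (.par D' (pow D (k-1))) := by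
  intro k
  induction k with
  | zero => intro W h; exact absurd rfl (srw2_mcode_ne h)
  | succ k ih =>
      intro W h
      rcases srw2_split h (SC.refl _) with ⟨D', hD, hsc⟩ | ⟨W', hW, hsc⟩
      · exact ⟨D', hD, by simpa using hsc⟩
      · obtain ⟨D', hD, hsc₂⟩ := ih W' hW
        have hk1 : 1 ≤ k := by
          by_contra hk0
          have hz : k = 0 := by omega
          subst hz
          exact (srw2_mcode_ne hW) rfl
        obtain ⟨j, rfl⟩ : ∃ j, k = j + 1 := ⟨k - 1, by omega⟩
        refine ⟨D', hD, ?_⟩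
        apply m_sc
        have e1 := sc_mcode hsc
        have e2 := sc_mcode hsc₂
        simp only [mcode, Nat.add_sub_cancel, mcode_pow] at e1 e2 ⊢
        rw [e1, e2, succ_nsmul]
        abel

/-! ### Local confluence -/

lemma mcode_par (P Q : Proc) : mcode (.par P Q) = mcode P + mcode Q := rfl

lemma split_two {P S₁ S₂ : Proc} {η₁ η₂ : Act} {B₁ B₂ : Proc}
    (h1 : SC P (.par (.pre η₁ B₁) S₁)) (h2 : SC P (.par (.pre η₂ B₂) S₂))
    (hne : cdP (.pre η₁ B₁) ≠ cdP (.pre η₂ B₂)) :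
    ∃ T, SC S₁ (.par (.pre η₂ B₂) T) ∧ SC S₂ (.par (.pre η₁ B₁) T) := by
  have e1 : mcode P = cdP (.pre η₁ B₁) ::ₘ mcode S₁ := by
    rw [sc_mcode h1]; rw [mcode_par, mcode_pre, Multiset.singleton_add]
  have e2 : mcode P = cdP (.pre η₂ B₂) ::ₘ mcode S₂ := by
    rw [sc_mcode h2]; rw [mcode_par, mcode_pre, Multiset.singleton_add]
  have e3 := e1.symm.trans e2
  rcases Multiset.cons_eq_cons.mp e3 with ⟨hcd, _⟩ | ⟨_, cs, hS₁, hS₂⟩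
  · exact absurd hcd hne
  · have hc₂ : cdP (.pre η₂ B₂) ∈ mcode S₁ := by
      rw [hS₁]; exact Multiset.mem_cons_self _ _
    obtain ⟨η₃, B₃, T, hsc, hcd₃, hmS₁⟩ := sc_split hc₂
    obtain ⟨heq, hm₃⟩ := cdP_inj hcd₃
    subst heq
    have hcs : cs = mcode T := cons_cancel (hS₁.symm.trans hmS₁)
    refine ⟨T, hsc.trans (SC.par (SC.pre _ (m_sc hm₃)) (SC.refl _)), ?_⟩
    apply m_sc
    rw [hS₂, hcs, mcode_par, mcode_pre, Multiset.singleton_add]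

lemma lc_red_red {P A B : Proc} {η : Act} {R S₁ : Proc} {k : ℕ} (hk : 1 ≤ k)
    (ha1 : SC P (.par (.pre η (.par R (pow (.pre η R) k))) S₁))
    (ha2 : SC A (.par (pow (.pre η R) (k+1)) S₁))
    {η' : Act} {R' S₂ : Proc} {k' : ℕ} (hk' : 1 ≤ k')
    (hb1 : SC P (.par (.pre η' (.par R' (pow (.pre η' R') k')) ) S₂))
    (hb2 : SC B (.par (pow (.pre η' R') (k'+1)) S₂)) :
    ∃ C, RwsSC A C ∧ RwsSC B C := by
  have e1 : mcode P = cdP (.pre η (.par R (pow (.pre η R) k))) ::ₘ mcode S₁ := by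
    rw [sc_mcode ha1]; rw [mcode_par, mcode_pre, Multiset.singleton_add]
  have e2 : mcode P = cdP (.pre η' (.par R' (pow (.pre η' R') k'))) ::ₘ mcode S₂ := by
    rw [sc_mcode hb1]; rw [mcode_par, mcode_pre, Multiset.singleton_add]
  by_cases hcd : cdP (.pre η (.par R (pow (.pre η R) k)))
      = cdP (.pre η' (.par R' (pow (.pre η' R') k')))
  · -- the two redexes are the same component
    obtain ⟨heq, hm⟩ := cdP_inj hcd
    subst heq
    have e3 := e1.symm.trans e2
    rw [← hcd] at e3
    have hms : mcode S₁ = mcode S₂ := cons_cancel e3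
    have hm' : mcode R + k • (mcode (Proc.pre η R))
        = mcode R' + k' • (mcode (Proc.pre η R')) := by
      have := hm
      rw [mcode_par, mcode_par, mcode_pow, mcode_pow] at this
      exact this
    by_cases haa : cdP (.pre η R) = cdP (.pre η R')
    · have hmR : mcode R = mcode R' := (cdP_inj haa).2
      have hsing : mcode (Proc.pre η R) = mcode (Proc.pre η R') := by
        rw [mcode_pre, mcode_pre, haa]
      have hkk : k = k' := by
        rw [hmR, hsing] at hm'
        have h4 := add_left_cancel hm'
        have h5 := congrArg Multiset.card h4
        simpa [mcode_pre] using h5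
      subst hkk
      refine ⟨B, ⟨A, Relation.ReflTransGen.refl, ?_⟩,
        ⟨B, Relation.ReflTransGen.refl, SC.refl _⟩⟩
      apply m_sc
      rw [sc_mcode ha2, sc_mcode hb2, mcode_par, mcode_par, mcode_pow, mcode_pow,
        hsing, hms]
    · exfalso
      have ha'mem : cdP (.pre η R') ∈ mcode R := by
        have hmem : cdP (.pre η R') ∈ mcode R' + k' • (mcode (Proc.pre η R')) := by
          refine Multiset.mem_add.mpr (Or.inr ?_)
          rw [mcode_pre, Multiset.nsmul_singleton]
          exact Multiset.mem_replicate.mpr ⟨by omega, rfl⟩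
        rw [← hm'] at hmem
        rcases Multiset.mem_add.mp hmem with h | h
        · exact h
        · rw [mcode_pre, Multiset.nsmul_singleton] at h
          exact absurd (Multiset.eq_of_mem_replicate h) (fun hh => haa hh.symm)
      have hamem : cdP (.pre η R) ∈ mcode R' := by
        have hmem : cdP (.pre η R) ∈ mcode R + k • (mcode (Proc.pre η R)) := by
          refine Multiset.mem_add.mpr (Or.inr ?_)
          rw [mcode_pre, Multiset.nsmul_singleton]
          exact Multiset.mem_replicate.mpr ⟨by omega, rfl⟩
        rw [hm'] at hmem
        rcases Multiset.mem_add.mp hmem with h | h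
        · exact h
        · rw [mcode_pre, Multiset.nsmul_singleton] at h
          exact absurd (Multiset.eq_of_mem_replicate h) haa
      have s1 := mem_mcode_size ha'mem
      have s2 := mem_mcode_size hamem
      omega
  · -- different components
    obtain ⟨T, hT₁, hT₂⟩ := split_two ha1 hb1 hcd
    have t1 := sc_mcode ha2
    have t2 := sc_mcode hb2
    have t3 := sc_mcode hT₁
    have t4 := sc_mcode hT₂
    refine ⟨.par (pow (.pre η R) (k+1)) (.par (pow (.pre η' R') (k'+1)) T), ?_, ?_⟩
    · have hstep : SRW2 A (.par (pow (.pre η' R') (k'+1)) (.par (pow (.pre η R) (k+1)) T)) := by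
        refine .red η' R' (.par (pow (.pre η R) (k+1)) T) k' hk' ?_ (SC.refl _)
        apply m_sc
        simp only [mcode_par, mcode_pre] at t1 t3 ⊢
        rw [t1, t3]
        abel
      refine ⟨_, Relation.ReflTransGen.single (srw2_rw hstep), ?_⟩
      apply m_sc
      simp only [mcode_par]
      abel
    · have hstep : SRW2 B (.par (pow (.pre η R) (k+1)) (.par (pow (.pre η' R') (k'+1)) T)) := by
        refine .red η R (.par (pow (.pre η' R') (k'+1)) T) k hk ?_ (SC.refl _)
        apply m_sc
        simp only [mcode_par, mcode_pre] at t2 t4 ⊢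
        rw [t2, t4]
        abel
      exact ⟨_, Relation.ReflTransGen.single (srw2_rw hstep), SC.refl _⟩

lemma lc_red_comp {P A B : Proc} {η : Act} {R S₁ : Proc} {k : ℕ} (hk : 1 ≤ k)
    (ha1 : SC P (.par (.pre η (.par R (pow (.pre η R) k))) S₁))
    (ha2 : SC A (.par (pow (.pre η R) (k+1)) S₁))
    {η' : Act} {B₀ B₀' S₂ : Proc} (hB : SRW2 B₀ B₀')
    (hb1 : SC P (.par (.pre η' B₀) S₂))
    (hb2 : SC B (.par (.pre η' B₀') S₂)) :
    ∃ C, RwsSC A C ∧ RwsSC B C := by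
  have e1 : mcode P = cdP (.pre η (.par R (pow (.pre η R) k))) ::ₘ mcode S₁ := by
    rw [sc_mcode ha1]; rw [mcode_par, mcode_pre, Multiset.singleton_add]
  have e2 : mcode P = cdP (.pre η' B₀) ::ₘ mcode S₂ := by
    rw [sc_mcode hb1]; rw [mcode_par, mcode_pre, Multiset.singleton_add]
  by_cases hcd : cdP (.pre η (.par R (pow (.pre η R) k))) = cdP (.pre η' B₀)
  · -- same component
    obtain ⟨heq, hm⟩ := cdP_inj hcd
    subst heq
    have e3 := e1.symm.trans e2
    rw [← hcd] at e3
    have hms : mcode S₁ = mcode S₂ := cons_cancel e3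
    have hB' : SRW2 (.par R (pow (.pre η R) k)) B₀' :=
      srw2_sc (m_sc hm) hB (SC.refl _)
    rcases srw2_split hB' (SC.refl _) with ⟨R', hR, hscB⟩ | ⟨W', hW, hscB⟩
    · -- rewrite happened in the R-part
      have hstep1 : RW (.pre η R) (.pre η R') := RW.pre η (srw2_rw hR)
      refine ⟨.par (pow (.pre η R') (k+1)) S₁, ?_, ?_⟩
      · exact rwsSC_of ha2
          (rws_parL S₁ (rws_pow (k+1) (Relation.ReflTransGen.single hstep1))) (SC.refl _)
      · have hscBB : SC B (.par (.pre η (.par R' (pow (.pre η R) k))) S₂) :=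
          hb2.trans (SC.par (SC.pre _ hscB) (SC.refl _))
        have hrws : Rws (.par (.pre η (.par R' (pow (.pre η R) k))) S₂)
            (.par (.pre η (.par R' (pow (.pre η R') k))) S₂) :=
          rws_parL S₂ (rws_pre η (rws_parR R'
            (rws_pow k (Relation.ReflTransGen.single hstep1))))
        have hrws2 := hrws.tail (RW.parL S₂ (RW.head hk))
        refine rwsSC_of hscBB hrws2 ?_
        apply m_sc
        rw [mcode_par, mcode_par, hms]
    · -- rewrite happened among the copies
      obtain ⟨D', hD, hscW⟩ := srw2_pow k W' hW
      obtain ⟨j, rfl⟩ : ∃ j, k = j + 1 := ⟨k - 1, by omega⟩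
      rcases srw2_pre_split hD (SC.refl _) with ⟨R₂, hR₂, hscD⟩ | ⟨R₁, j₁, hj₁, hscR, hscD⟩
      · -- a copy was rewritten strictly inside its body
        have hstep1 : RW (.pre η R) (.pre η R₂) := RW.pre η (srw2_rw hR₂)
        refine ⟨.par (pow (.pre η R₂) (j+1+1)) S₁, ?_, ?_⟩
        · exact rwsSC_of ha2
            (rws_parL S₁ (rws_pow (j+1+1) (Relation.ReflTransGen.single hstep1))) (SC.refl _)
        · have hscBB : SC B
              (.par (.pre η (.par R (.par (.pre η R₂) (pow (.pre η R) j)))) S₂) := by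
            refine hb2.trans (SC.par (SC.pre _ ?_) (SC.refl _))
            refine hscB.trans (SC.par (SC.refl R) ?_)
            exact hscW.trans (SC.par hscD (SC.refl _))
          have hrws : Rws (.par (.pre η (.par R (.par (.pre η R₂) (pow (.pre η R) j)))) S₂)
              (.par (.pre η (.par R₂ (.par (.pre η R₂) (pow (.pre η R₂) j)))) S₂) :=
            rws_parL S₂ (rws_pre η (rws_par
              (Relation.ReflTransGen.single (srw2_rw hR₂))
              (rws_parR _ (rws_pow j (Relation.ReflTransGen.single hstep1)))))
          have hrws2 := hrws.tail (RW.parL S₂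
            (RW.head (show 1 ≤ j + 1 by omega)))
          refine rwsSC_of hscBB hrws2 ?_
          apply m_sc
          rw [mcode_par, mcode_par, hms]
      · -- a copy was itself contracted as a redex
        have key1 : mcode (Proc.pre η R) = mcode (Proc.pre η (.par R₁ (pow (.pre η R₁) j₁))) := by
          rw [mcode_pre, mcode_pre]
          simp only [cdP, sc_mcode hscR]
        refine ⟨.par (pow (.pre η R₁) ((j+1+1)*(j₁+1))) S₁, ?_, ?_⟩
        · -- A side
          have hscAA : SC A (.par (pow (.pre η (.par R₁ (pow (.pre η R₁) j₁))) (j+1+1)) S₁) := by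
            apply m_sc
            rw [sc_mcode ha2]
            rw [mcode_par, mcode_par, mcode_pow, mcode_pow, key1]
          have hrws : Rws (.par (pow (.pre η (.par R₁ (pow (.pre η R₁) j₁))) (j+1+1)) S₁)
              (.par (pow (pow (.pre η R₁) (j₁+1)) (j+1+1)) S₁) :=
            rws_parL S₁ (rws_pow (j+1+1) (Relation.ReflTransGen.single (RW.head hj₁)))
          refine rwsSC_of hscAA hrws ?_
          apply m_sc
          rw [mcode_par, mcode_par, mcode_pow, mcode_pow, mcode_pow, ← mul_nsmul, Nat.mul_comm (j₁+1) (j+1+1)]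
        · -- B side
          have hM1 : 1 ≤ j₁ + (j+1) * (j₁ + 1) := by
            have := Nat.mul_pos (show 0 < j+1 by omega) (show 0 < j₁+1 by omega)
            omega
          have hMtot : (j₁ + (j+1) * (j₁ + 1)) + 1 = (j+1+1) * (j₁+1) := by ring
          have hscBB : SC B
              (.par (.pre η (.par (.par R₁ (pow (.pre η R₁) j₁))
                (.par (pow (.pre η R₁) (j₁+1))
                  (pow (.pre η (.par R₁ (pow (.pre η R₁) j₁))) j)))) S₂) := by
            refine hb2.trans (SC.par (SC.pre _ ?_) (SC.refl _))
            apply m_sc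
            have t1 := sc_mcode hscB
            have t2 := sc_mcode hscW
            have t3 := sc_mcode hscD
            have t4 := sc_mcode hscR
            simp only [mcode_par, mcode_pow, Nat.add_sub_cancel] at t1 t2 t3 t4 ⊢
            rw [t1, t2, t3, t4, key1]
          have hrws : Rws
              (.par (.pre η (.par (.par R₁ (pow (.pre η R₁) j₁))
                (.par (pow (.pre η R₁) (j₁+1))
                  (pow (.pre η (.par R₁ (pow (.pre η R₁) j₁))) j)))) S₂)
              (.par (.pre η (.par (.par R₁ (pow (.pre η R₁) j₁))
                (.par (pow (.pre η R₁) (j₁+1))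
                  (pow (pow (.pre η R₁) (j₁+1)) j)))) S₂) :=
            rws_parL S₂ (rws_pre η (rws_parR _ (rws_parR _
              (rws_pow j (Relation.ReflTransGen.single (RW.head hj₁))))))
          have hlast : RW
              (.par (.pre η (.par (.par R₁ (pow (.pre η R₁) j₁))
                (.par (pow (.pre η R₁) (j₁+1))
                  (pow (pow (.pre η R₁) (j₁+1)) j)))) S₂)
              (.par (pow (.pre η R₁) ((j₁ + (j+1) * (j₁ + 1))+1)) S₂) := by
            refine RW.parL S₂ (RW.congr (SC.pre η ?_) (RW.head hM1) (SC.refl _))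
            apply m_sc
            refine Multiset.ext.mpr fun b => ?_
            simp only [mcode_par, mcode_pow, Multiset.count_add, Multiset.count_nsmul]
            ring
          refine rwsSC_of hscBB (hrws.tail hlast) ?_
          apply m_sc
          rw [mcode_par, mcode_par, hMtot, hms]
  · -- different components
    obtain ⟨T, hT₁, hT₂⟩ := split_two ha1 hb1 hcd
    have t1 := sc_mcode ha2
    have t2 := sc_mcode hb2
    have t3 := sc_mcode hT₁
    have t4 := sc_mcode hT₂
    refine ⟨.par (pow (.pre η R) (k+1)) (.par (.pre η' B₀') T), ?_, ?_⟩
    · have hstep : SRW2 A (.par (.pre η' B₀') (.par (pow (.pre η R) (k+1)) T)) := by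
        refine .comp η' B₀ B₀' (.par (pow (.pre η R) (k+1)) T) hB ?_ (SC.refl _)
        apply m_sc
        simp only [mcode_par, mcode_pre] at t1 t3 ⊢
        rw [t1, t3]
        abel
      refine ⟨_, Relation.ReflTransGen.single (srw2_rw hstep), ?_⟩
      apply m_sc
      simp only [mcode_par]
      abel
    · have hstep : SRW2 B (.par (pow (.pre η R) (k+1)) (.par (.pre η' B₀') T)) := by
        refine .red η R (.par (.pre η' B₀') T) k hk ?_ (SC.refl _)
        apply m_sc
        simp only [mcode_par, mcode_pre] at t2 t4 ⊢
        rw [t2, t4]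
        abel
      exact ⟨_, Relation.ReflTransGen.single (srw2_rw hstep), SC.refl _⟩

theorem lc_main : ∀ (n : ℕ) (P A B : Proc), P.size ≤ n → SRW2 P A → SRW2 P B →
    ∃ C, RwsSC A C ∧ RwsSC B C := by
  intro n
  induction n with
  | zero =>
      intro P A B hs hA hB
      exfalso
      have h0 : mcode P = 0 := by
        rw [mcode_comps, size_zero_comps (Nat.le_zero.mp hs)]; rfl
      exact srw2_mcode_ne hA h0
  | succ n ih =>
      intro P A B hs hA hB
      cases hA with
      | red η R S₁ k hk ha1 ha2 =>
          cases hB with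
          | red η' R' S₂ k' hk' hb1 hb2 =>
              exact lc_red_red hk ha1 ha2 hk' hb1 hb2
          | comp η' B₀ B₀' S₂ hB₀ hb1 hb2 =>
              exact lc_red_comp hk ha1 ha2 hB₀ hb1 hb2
      | comp η B₀ B₀' S₁ hB₀ ha1 ha2 =>
          cases hB with
          | red η' R' S₂ k' hk' hb1 hb2 =>
              obtain ⟨C, h1, h2⟩ := lc_red_comp hk' hb1 hb2 hB₀ ha1 ha2
              exact ⟨C, h2, h1⟩
          | comp η' B₁ B₁' S₂ hB₁ hb1 hb2 =>
              have e1 : mcode P = cdP (.pre η B₀) ::ₘ mcode S₁ := by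
                rw [sc_mcode ha1]; rw [mcode_par, mcode_pre, Multiset.singleton_add]
              have e2 : mcode P = cdP (.pre η' B₁) ::ₘ mcode S₂ := by
                rw [sc_mcode hb1]; rw [mcode_par, mcode_pre, Multiset.singleton_add]
              by_cases hcd : cdP (.pre η B₀) = cdP (.pre η' B₁)
              · obtain ⟨heq, hm⟩ := cdP_inj hcd
                subst heq
                have e3 := e1.symm.trans e2
                rw [← hcd] at e3
                have hms : mcode S₁ = mcode S₂ := cons_cancel e3
                have hsz : B₀.size ≤ n := by
                  have h4 := sc_size ha1
                  simp only [Proc.size] at h4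
                  omega
                obtain ⟨C₀, ⟨CA, hCA, hCAsc⟩, ⟨CB, hCB, hCBsc⟩⟩ :=
                  ih B₀ B₀' B₁' hsz hB₀ (srw2_sc (m_sc hm) hB₁ (SC.refl _))
                refine ⟨.par (.pre η C₀) S₁, ?_, ?_⟩
                · exact rwsSC_of ha2 (rws_parL S₁ (rws_pre η hCA))
                    (SC.par (SC.pre η hCAsc) (SC.refl _))
                · exact rwsSC_of hb2 (rws_parL S₂ (rws_pre η hCB))
                    (SC.par (SC.pre η hCBsc) (m_sc hms.symm))
              · obtain ⟨T, hT₁, hT₂⟩ := split_two ha1 hb1 hcd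
                have t1 := sc_mcode ha2
                have t2 := sc_mcode hb2
                have t3 := sc_mcode hT₁
                have t4 := sc_mcode hT₂
                refine ⟨.par (.pre η B₀') (.par (.pre η' B₁') T), ?_, ?_⟩
                · have hstep : SRW2 A (.par (.pre η' B₁') (.par (.pre η B₀') T)) := by
                    refine .comp η' B₁ B₁' (.par (.pre η B₀') T) hB₁ ?_ (SC.refl _)
                    apply m_sc
                    simp only [mcode_par, mcode_pre] at t1 t3 ⊢
                    rw [t1, t3]
                    abel
                  refine ⟨_, Relation.ReflTransGen.single (srw2_rw hstep), ?_⟩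
                  apply m_sc
                  simp only [mcode_par]
                  abel
                · have hstep : SRW2 B (.par (.pre η B₀') (.par (.pre η' B₁') T)) := by
                    refine .comp η B₀ B₀' (.par (.pre η' B₁') T) hB₀ ?_ (SC.refl _)
                    apply m_sc
                    simp only [mcode_par, mcode_pre] at t2 t4 ⊢
                    rw [t2, t4]
                    abel
                  exact ⟨_, Relation.ReflTransGen.single (srw2_rw hstep), SC.refl _⟩

/-! ### Unique normal forms -/

lemma nf_sc {P Q : Proc} (h : NF P) (hsc : SC P Q) : NF Q :=
  fun ⟨X, hX⟩ => h ⟨X, RW.congr hsc hX (SC.refl _)⟩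

lemma nf_rws {P A : Proc} (h : NF P) (hr : Rws P A) : A = P := by
  rcases hr.cases_head with rfl | ⟨W, h1, _⟩
  · rfl
  · exact absurd ⟨W, h1⟩ h

lemma norm_ex : ∀ (n : ℕ) (P : Proc), wgt P ≤ n → ∃ A, Rws P A ∧ NF A := by
  intro n
  induction n with
  | zero =>
      intro P h
      by_cases hP : NF P
      · exact ⟨P, Relation.ReflTransGen.refl, hP⟩
      · obtain ⟨P₁, h₁⟩ := not_not.mp hP
        have := rw_wgt h₁
        omega
  | succ n ih =>
      intro P h
      by_cases hP : NF P
      · exact ⟨P, Relation.ReflTransGen.refl, hP⟩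
      · obtain ⟨P₁, h₁⟩ := not_not.mp hP
        obtain ⟨A, hA, hnf⟩ := ih P₁ (by have := rw_wgt h₁; omega)
        exact ⟨A, Relation.ReflTransGen.head h₁ hA, hnf⟩

theorem unf : ∀ (n : ℕ) (P Q A B : Proc), wgt P ≤ n → SC P Q →
    Rws P A → Rws Q B → NF A → NF B → SC A B := by
  intro n
  induction n with
  | zero =>
      intro P Q A B h hsc hA hB nfA nfB
      have hP : NF P := fun ⟨X, hX⟩ => by have := rw_wgt hX; omega
      have hQ : NF Q := nf_sc hP hsc
      rw [nf_rws hP hA, nf_rws hQ hB]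
      exact hsc
  | succ n ih =>
      intro P Q A B h hsc hA hB nfA nfB
      rcases hA.cases_head with rfl | ⟨A₁, hPA₁, hA₁⟩
      · have hQ : NF Q := nf_sc nfA hsc
        rw [nf_rws hQ hB]
        exact hsc
      · rcases hB.cases_head with rfl | ⟨B₁, hQB₁, hB₁⟩
        · have hP : NF P := nf_sc nfB hsc.symm
          rw [nf_rws hP (Relation.ReflTransGen.head hPA₁ hA₁)]
          exact hsc
        · have hPB₁ : RW P B₁ := RW.congr hsc hQB₁ (SC.refl _)
          obtain ⟨C, ⟨CA, hCA, hCAsc⟩, ⟨CB, hCB, hCBsc⟩⟩ :=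
            lc_main P.size P A₁ B₁ le_rfl (rw_srw2 hPA₁) (rw_srw2 hPB₁)
          obtain ⟨D, hD, hDnf⟩ := norm_ex (wgt CA) CA le_rfl
          have h₁ : wgt A₁ ≤ n := by have := rw_wgt hPA₁; omega
          have hAD : SC A D :=
            ih A₁ A₁ A D h₁ (SC.refl _) hA₁ (hCA.trans hD) nfA hDnf
          have hscCC : SC CB CA := hCBsc.trans hCAsc.symm
          obtain ⟨D', hD', hD'sc⟩ := rws_of_sc hscCC hD
          have hD'nf : NF D' := nf_sc hDnf hD'sc.symm
          have h₂ : wgt B₁ ≤ n := by have := rw_wgt hPB₁; omega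
          have hBD : SC B D' :=
            ih B₁ B₁ B D' h₂ (SC.refl _) hB₁ (hCB.trans hD') nfB hD'nf
          exact (hAD.trans hD'sc.symm).trans hBD.symm

theorem unique_nf {P A B : Proc} (hA : Rws P A) (hB : Rws P B)
    (nfA : NF A) (nfB : NF B) : SC A B :=
  unf (wgt P) P P A B le_rfl (SC.refl _) hA hB nfA nfB

/-! ### Term side: encoding of term structural congruence -/

def tmcode : Tm → Multiset ℕ
  | .nil => 0
  | .pre η M => {Nat.pair 0 (Nat.pair η.enc (Encodable.encode (tmcode M)))}
  | .par M N => tmcode M + tmcode N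
  | .var i => {Nat.pair 1 i}

def cdT : Tm → ℕ
  | .pre η M => Nat.pair 0 (Nat.pair η.enc (Encodable.encode (tmcode M)))
  | .var i => Nat.pair 1 i
  | _ => 0

lemma tmcode_pre (η : Act) (M : Tm) : tmcode (.pre η M) = {cdT (.pre η M)} := rfl
lemma tmcode_var (i : ℕ) : tmcode (.var i) = {cdT (.var i)} := rfl
lemma tmcode_par (M N : Tm) : tmcode (.par M N) = tmcode M + tmcode N := rfl

lemma cdT_pre_inj {η η' : Act} {M M' : Tm}
    (h : cdT (.pre η M) = cdT (.pre η' M')) : η = η' ∧ tmcode M = tmcode M' := by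
  simp only [cdT, Nat.pair_eq_pair] at h
  exact ⟨Act.enc_inj h.2.1, Encodable.encode_injective h.2.2⟩

lemma cdT_var_inj {i j : ℕ} (h : cdT (.var i) = cdT (.var j)) : i = j := by
  simpa [cdT, Nat.pair_eq_pair] using h

lemma cdT_pre_ne_var (η : Act) (M : Tm) (i : ℕ) : cdT (.pre η M) ≠ cdT (.var i) := by
  simp [cdT, Nat.pair_eq_pair]

def tcomps : Tm → List Tm
  | .nil => []
  | .pre η M => [.pre η M]
  | .par M N => tcomps M ++ tcomps N
  | .var i => [.var i]

def tbuild : List Tm → Tm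
  | [] => .nil
  | c :: l => .par c (tbuild l)

def Tm.tsize : Tm → ℕ
  | .nil => 0
  | .pre _ M => 1 + M.tsize
  | .par M N => M.tsize + N.tsize
  | .var _ => 1

lemma tcomps_shape {M Y : Tm} (h : Y ∈ tcomps M) :
    (∃ η B, Y = .pre η B) ∨ (∃ i, Y = .var i) := by
  induction M with
  | nil => simp [tcomps] at h
  | pre η B _ => simp [tcomps] at h; exact Or.inl ⟨η, B, h⟩
  | par P Q ih1 ih2 =>
      simp only [tcomps, List.mem_append] at h
      rcases h with h | h
      exacts [ih1 h, ih2 h]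
  | var i => simp [tcomps] at h; exact Or.inr ⟨i, h⟩

lemma tcomps_tsize_le {M Y : Tm} (h : Y ∈ tcomps M) : Y.tsize ≤ M.tsize := by
  induction M with
  | nil => simp [tcomps] at h
  | pre η B _ => simp [tcomps] at h; subst h; exact le_rfl
  | par P Q ih1 ih2 =>
      simp only [tcomps, List.mem_append] at h
      rcases h with h | h
      · exact (ih1 h).trans (by simp [Tm.tsize])
      · exact (ih2 h).trans (by simp [Tm.tsize])
  | var i => simp [tcomps] at h; subst h; exact le_rfl

lemma tcomps_vars_sub {M Y : Tm} (h : Y ∈ tcomps M) : tmVars Y ⊆ tmVars M := by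
  induction M with
  | nil => simp [tcomps] at h
  | pre η B _ => simp [tcomps] at h; subst h; exact Set.Subset.rfl
  | par P Q ih1 ih2 =>
      simp only [tcomps, List.mem_append] at h
      rcases h with h | h
      · exact (ih1 h).trans Set.subset_union_left
      · exact (ih2 h).trans Set.subset_union_right
  | var i => simp [tcomps] at h; subst h; exact Set.Subset.rfl

lemma tcomps_names_sub {M Y : Tm} (h : Y ∈ tcomps M) : tmNames Y ⊆ tmNames M := by
  induction M with
  | nil => simp [tcomps] at h
  | pre η B _ => simp [tcomps] at h; subst h; exact Set.Subset.rfl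
  | par P Q ih1 ih2 =>
      simp only [tcomps, List.mem_append] at h
      rcases h with h | h
      · exact (ih1 h).trans Set.subset_union_left
      · exact (ih2 h).trans Set.subset_union_right
  | var i => simp [tcomps] at h; subst h; exact Set.Subset.rfl

lemma tmsc_tmcode {M N : Tm} (h : TmSC M N) : tmcode M = tmcode N := by
  induction h with
  | refl => rfl
  | symm _ ih => exact ih.symm
  | trans _ _ ih1 ih2 => exact ih1.trans ih2
  | comm M N => exact add_comm _ _
  | assoc M N K => exact (add_assoc _ _ _).symm
  | unit M => exact add_zero _
  | pre η _ ih => simp [tmcode, ih]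
  | par _ _ ih1 ih2 => simp [tmcode, ih1, ih2]

lemma tbuild_append (l₁ l₂ : List Tm) :
    TmSC (tbuild (l₁ ++ l₂)) (.par (tbuild l₁) (tbuild l₂)) := by
  induction l₁ with
  | nil => exact (TmSC.unit (tbuild l₂)).symm.trans (TmSC.comm _ _)
  | cons c l ih => exact ((TmSC.par (TmSC.refl c) ih).trans (TmSC.assoc _ _ _))

lemma tsc_tbuild_tcomps (M : Tm) : TmSC M (tbuild (tcomps M)) := by
  induction M with
  | nil => exact TmSC.refl _
  | pre η B _ => exact (TmSC.unit _).symm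
  | par P Q ih1 ih2 => exact (TmSC.par ih1 ih2).trans (tbuild_append _ _).symm
  | var i => exact (TmSC.unit _).symm

lemma tbuild_perm {l l' : List Tm} (h : l.Perm l') : TmSC (tbuild l) (tbuild l') := by
  induction h with
  | nil => exact TmSC.refl _
  | cons x _ ih => exact TmSC.par (TmSC.refl x) ih
  | swap x y t =>
      exact ((TmSC.assoc _ _ _).trans
        (TmSC.par (TmSC.comm _ _) (TmSC.refl (tbuild t)))).trans (TmSC.assoc _ _ _).symm
  | trans _ _ ih1 ih2 => exact ih1.trans ih2

lemma tmcode_tbuild {l : List Tm}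
    (h : ∀ Y ∈ l, (∃ η B, Y = Tm.pre η B) ∨ (∃ i, Y = Tm.var i)) :
    tmcode (tbuild l) = (l.map cdT : Multiset ℕ) := by
  induction l with
  | nil => simp [tbuild, tmcode]
  | cons Y l ih =>
      have hrest := ih (fun Z hZ => h Z (List.mem_cons_of_mem _ hZ))
      rcases h Y (List.mem_cons_self) with ⟨η, B, rfl⟩ | ⟨i, rfl⟩
      · simp [tbuild, tmcode, hrest, cdT]
      · simp [tbuild, tmcode, hrest, cdT]

lemma tmcode_tcomps (M : Tm) : tmcode M = ((tcomps M).map cdT : Multiset ℕ) := by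
  rw [tmsc_tmcode (tsc_tbuild_tcomps M)]
  exact tmcode_tbuild (fun Y hY => tcomps_shape hY)

lemma tbuild_sc_aux : ∀ (l₁ l₂ : List Tm),
    (∀ Y ∈ l₁, ∀ Z ∈ l₂, cdT Y = cdT Z → TmSC Y Z) →
    ((l₁.map cdT : Multiset ℕ) = (l₂.map cdT : Multiset ℕ)) →
    TmSC (tbuild l₁) (tbuild l₂) := by
  intro l₁
  induction l₁ with
  | nil =>
      intro l₂ _ h
      cases l₂ with
      | nil => exact TmSC.refl _
      | cons a t =>
          have := Multiset.coe_eq_coe.mp h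
          simp [List.nil_perm] at this
  | cons Y l ih =>
      intro l₂ hrel h
      have hY : cdT Y ∈ l₂.map cdT := by
        have h1 : cdT Y ∈ ((Y :: l).map cdT : Multiset ℕ) := by simp
        rw [h] at h1
        exact_mod_cast h1
      obtain ⟨Z, hZ, hcd⟩ := List.mem_map.mp hY
      have hperm : l₂.Perm (Z :: l₂.erase Z) := List.perm_cons_erase hZ
      have h2 : ((l.map cdT : Multiset ℕ)) = (((l₂.erase Z).map cdT : Multiset ℕ)) := by
        have h3 : ((Y :: l).map cdT : Multiset ℕ) = (((Z :: l₂.erase Z)).map cdT : Multiset ℕ) := by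
          rw [h]
          exact_mod_cast Multiset.coe_eq_coe.mpr (hperm.map cdT)
        simp only [List.map_cons, Multiset.cons_coe] at h3
        rw [hcd.symm] at h3
        exact (Multiset.cons_inj_right _).mp h3
      have hsc : TmSC (tbuild l) (tbuild (l₂.erase Z)) :=
        ih _ (fun Y' hY' Z' hZ' => hrel Y' (List.mem_cons_of_mem _ hY') Z'
          (List.mem_of_mem_erase hZ')) h2
      have hYZ : TmSC Y Z := hrel Y (List.mem_cons_self) Z hZ hcd.symm
      exact (TmSC.par hYZ hsc).trans (tbuild_perm hperm).symm

lemma tsize_zero_tcomps {M : Tm} (h : M.tsize = 0) : tcomps M = [] := by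
  induction M with
  | nil => rfl
  | pre η B _ => simp only [Tm.tsize] at h; omega
  | par P Q ih1 ih2 =>
      simp only [Tm.tsize, Nat.add_eq_zero] at h
      simp [tcomps, ih1 h.1, ih2 h.2]
  | var i => simp only [Tm.tsize] at h; exact absurd h (by omega)

lemma tm_sc_aux : ∀ (n : ℕ) (M N : Tm), M.tsize ≤ n → tmcode M = tmcode N → TmSC M N := by
  intro n
  induction n with
  | zero =>
      intro M N hs h
      have hM : tcomps M = [] := tsize_zero_tcomps (Nat.le_zero.mp hs)
      have h0 : tmcode M = 0 := by rw [tmcode_tcomps, hM]; rfl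
      have h2 : ((tcomps N).map cdT : Multiset ℕ) = 0 := by
        rw [← tmcode_tcomps, ← h, h0]
      have hN : tcomps N = [] := by
        cases hq : tcomps N with
        | nil => rfl
        | cons a t => rw [hq] at h2; simp at h2
      have s1 : TmSC M .nil := by
        have := tsc_tbuild_tcomps M; rw [hM] at this; exact this
      have s2 : TmSC N .nil := by
        have := tsc_tbuild_tcomps N; rw [hN] at this; exact this
      exact s1.trans s2.symm
  | succ n ih =>
      intro M N hs h
      refine ((tsc_tbuild_tcomps M).trans ?_).trans (tsc_tbuild_tcomps N).symm
      apply tbuild_sc_aux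
      · intro Y hY Z hZ hcd
        rcases tcomps_shape hY with ⟨η, B, rfl⟩ | ⟨i, rfl⟩
        · rcases tcomps_shape hZ with ⟨η', B', rfl⟩ | ⟨j, rfl⟩
          · obtain ⟨rfl, hm⟩ := cdT_pre_inj hcd
            refine TmSC.pre _ (ih B B' ?_ hm)
            have := tcomps_tsize_le hY
            simp only [Tm.tsize] at this
            omega
          · exact absurd hcd (cdT_pre_ne_var _ _ _)
        · rcases tcomps_shape hZ with ⟨η', B', rfl⟩ | ⟨j, rfl⟩
          · exact absurd hcd.symm (cdT_pre_ne_var _ _ _)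
          · rw [cdT_var_inj hcd]; exact TmSC.refl _
      · rw [← tmcode_tcomps, ← tmcode_tcomps]; exact h

lemma tm_sc {M N : Tm} (h : tmcode M = tmcode N) : TmSC M N :=
  tm_sc_aux M.tsize M N le_rfl h

lemma tmcode_tpow (D : Tm) (n : ℕ) : tmcode (tpow D n) = n • tmcode D := by
  induction n with
  | zero => simp [tpow, tmcode]
  | succ n ih =>
      show tmcode D + tmcode (tpow D n) = (n + 1) • tmcode D
      rw [ih, succ_nsmul, add_comm]

/-! ### Names and variables of reducts -/

lemma tmsc_names {M N : Tm} (h : TmSC M N) : tmNames M = tmNames N := by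
  induction h with
  | refl => rfl
  | symm _ ih => exact ih.symm
  | trans _ _ ih1 ih2 => exact ih1.trans ih2
  | comm M N => exact Set.union_comm _ _
  | assoc M N K => exact (Set.union_assoc _ _ _).symm
  | unit M => exact Set.union_empty _
  | pre η _ ih => simp only [tmNames, ih]
  | par _ _ ih1 ih2 => simp only [tmNames, ih1, ih2]

lemma tmsc_vars {M N : Tm} (h : TmSC M N) : tmVars M = tmVars N := by
  induction h with
  | refl => rfl
  | symm _ ih => exact ih.symm
  | trans _ _ ih1 ih2 => exact ih1.trans ih2
  | comm M N => exact Set.union_comm _ _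
  | assoc M N K => exact (Set.union_assoc _ _ _).symm
  | unit M => exact Set.union_empty _
  | pre η _ ih => simpa only [tmVars] using ih
  | par _ _ ih1 ih2 => simp only [tmVars, ih1, ih2]

lemma tpow_names_sub (M : Tm) (n : ℕ) : tmNames (tpow M n) ⊆ tmNames M := by
  induction n with
  | zero => intro x hx; simp [tpow, tmNames] at hx
  | succ n ih =>
      intro x hx
      rcases (show x ∈ tmNames M ∪ tmNames (tpow M n) from hx) with h | h
      · exact h
      · exact ih h

lemma tpow_vars_sub (M : Tm) (n : ℕ) : tmVars (tpow M n) ⊆ tmVars M := by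
  induction n with
  | zero => intro x hx; simp [tpow, tmVars] at hx
  | succ n ih =>
      intro x hx
      rcases (show x ∈ tmVars M ∪ tmVars (tpow M n) from hx) with h | h
      · exact h
      · exact ih h

lemma tmrw_names {M N : Tm} (h : TmRW M N) : tmNames N ⊆ tmNames M := by
  induction h with
  | head hk =>
      rename_i η M k
      refine (tpow_names_sub _ _).trans ?_
      show {η.name} ∪ tmNames M ⊆ {η.name} ∪ (tmNames M ∪ tmNames (tpow (.pre η M) k))
      exact Set.union_subset_union Set.Subset.rfl Set.subset_union_left
  | pre η _ ih => exact Set.union_subset_union Set.Subset.rfl ih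
  | parL N _ ih => exact Set.union_subset_union ih Set.Subset.rfl
  | parR M _ ih => exact Set.union_subset_union Set.Subset.rfl ih
  | congr h1 _ h3 ih =>
      rw [tmsc_names h1, ← tmsc_names h3]
      exact ih

lemma tmrw_vars {M N : Tm} (h : TmRW M N) : tmVars N ⊆ tmVars M := by
  induction h with
  | head hk =>
      rename_i η M k
      refine (tpow_vars_sub _ _).trans ?_
      show tmVars M ⊆ tmVars M ∪ tmVars (tpow (.pre η M) k)
      exact Set.subset_union_left
  | pre η _ ih => exact ih
  | parL N _ ih => exact Set.union_subset_union ih Set.Subset.rfl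
  | parR M _ ih => exact Set.union_subset_union Set.Subset.rfl ih
  | congr h1 _ h3 ih =>
      rw [tmsc_vars h1, ← tmsc_vars h3]
      exact ih

/-- Variables and names of `U` occur among those of `Mf`. -/
def GoodT (Mf U : Tm) : Prop := tmVars U ⊆ tmVars Mf ∧ tmNames U ⊆ tmNames Mf

lemma good_comp {Mf N Y : Tm} (h : GoodT Mf N) (hY : Y ∈ tcomps N) : GoodT Mf Y :=
  ⟨(tcomps_vars_sub hY).trans h.1, (tcomps_names_sub hY).trans h.2⟩

lemma good_body {Mf : Tm} {η : Act} {B : Tm} (h : GoodT Mf (.pre η B)) : GoodT Mf B := by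
  refine ⟨h.1, ?_⟩
  refine Set.Subset.trans ?_ h.2
  show tmNames B ⊆ {η.name} ∪ tmNames B
  exact Set.subset_union_right

lemma good_tbuild {Mf : Tm} {l : List Tm} (h : ∀ Y ∈ l, GoodT Mf Y) :
    GoodT Mf (tbuild l) := by
  induction l with
  | nil => exact ⟨by simp [tbuild, tmVars], by simp [tbuild, tmNames]⟩
  | cons Y l ih =>
      obtain ⟨h1, h2⟩ := h Y (List.mem_cons_self)
      obtain ⟨h3, h4⟩ := ih (fun Z hZ => h Z (List.mem_cons_of_mem _ hZ))
      exact ⟨Set.union_subset h1 h3, Set.union_subset h2 h4⟩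

lemma good_tmrws {Mf N : Tm} (h : TmRws Mf N) : GoodT Mf N := by
  induction h with
  | refl => exact ⟨Set.Subset.rfl, Set.Subset.rfl⟩
  | tail _ h ih => exact ⟨(tmrw_vars h).trans ih.1, (tmrw_names h).trans ih.2⟩

/-! ### Instantiation lemmas and reflection -/

lemma inst_tmsc (σ : ℕ → Proc) {U V : Tm} (h : TmSC U V) : SC (inst σ U) (inst σ V) := by
  induction h with
  | refl => exact SC.refl _
  | symm _ ih => exact ih.symm
  | trans _ _ ih1 ih2 => exact ih1.trans ih2
  | comm M N => exact SC.comm _ _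
  | assoc M N K => exact SC.assoc _ _ _
  | unit M => exact SC.unit _
  | pre η _ ih => exact SC.pre η ih
  | par _ _ ih1 ih2 => exact SC.par ih1 ih2

lemma inst_tpow (σ : ℕ → Proc) (U : Tm) (n : ℕ) :
    inst σ (tpow U n) = pow (inst σ U) n := by
  induction n with
  | zero => rfl
  | succ n ih => simp [tpow, pow, inst, ih]

lemma inst_tmrw (σ : ℕ → Proc) {U V : Tm} (h : TmRW U V) : RW (inst σ U) (inst σ V) := by
  induction h with
  | head hk =>
      rename_i η M k
      simp only [inst, inst_tpow]
      exact RW.head hk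
  | pre η _ ih => exact RW.pre η ih
  | parL N _ ih => exact RW.parL _ ih
  | parR M _ ih => exact RW.parR _ ih
  | congr h1 _ h3 ih => exact RW.congr (inst_tmsc σ h1) ih (inst_tmsc σ h3)

lemma inst_tmrws (σ : ℕ → Proc) {U V : Tm} (h : TmRws U V) :
    Rws (inst σ U) (inst σ V) := by
  induction h with
  | refl => exact Relation.ReflTransGen.refl
  | tail _ h ih => exact ih.tail (inst_tmrw σ h)

lemma list_extract {α : Type} [DecidableEq α] (f : α → ℕ) :
    ∀ (k : ℕ) (l : List α) (c : ℕ),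
      Multiset.replicate k c ≤ (l.map f : Multiset ℕ) →
      ∃ l₁ l₂ : List α, l.Perm (l₁ ++ l₂) ∧ l₁.map f = List.replicate k c ∧
        ((l.map f : Multiset ℕ)) = Multiset.replicate k c + (l₂.map f : Multiset ℕ) := by
  intro k
  induction k with
  | zero => intro l c _; exact ⟨[], l, by simp, rfl, by simp⟩
  | succ k ih =>
      intro l c hle
      have hc : c ∈ (l.map f : Multiset ℕ) :=
        Multiset.mem_of_le hle (Multiset.mem_replicate.mpr ⟨by omega, rfl⟩)
      have hc' : c ∈ l.map f := by exact_mod_cast hc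
      obtain ⟨Y, hYl, hfY⟩ := List.mem_map.mp hc'
      have hperm : l.Perm (Y :: l.erase Y) := List.perm_cons_erase hYl
      have hml : (l.map f : Multiset ℕ) = c ::ₘ ((l.erase Y).map f : Multiset ℕ) := by
        have := Multiset.coe_eq_coe.mpr (hperm.map f)
        simpa [hfY] using this
      have hle' : Multiset.replicate k c ≤ ((l.erase Y).map f : Multiset ℕ) := by
        have h2 : Multiset.replicate (k+1) c ≤ c ::ₘ ((l.erase Y).map f : Multiset ℕ) := by
          rw [← hml]; exact hle
        rw [Multiset.replicate_succ] at h2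
        exact (Multiset.cons_le_cons_iff c).mp h2
      obtain ⟨l₁, l₂, hp, hm1, hm2⟩ := ih (l.erase Y) c hle'
      refine ⟨Y :: l₁, l₂, ?_, ?_, ?_⟩
      · exact hperm.trans (hp.cons Y)
      · simp [hfY, hm1, List.replicate_succ]
      · rw [hml, hm2, Multiset.replicate_succ, Multiset.cons_add]

lemma map_transfer {α : Type} [DecidableEq α] (f g : α → ℕ) :
    ∀ (l₁ l₂ : List α),
      (∀ y ∈ l₁, ∀ z ∈ l₂, f y = f z → g y = g z) →
      ((l₁.map f : Multiset ℕ) = l₂.map f) →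
      ((l₁.map g : Multiset ℕ) = l₂.map g) := by
  intro l₁
  induction l₁ with
  | nil =>
      intro l₂ _ h
      cases l₂ with
      | nil => rfl
      | cons z t =>
          exfalso
          have := Multiset.coe_eq_coe.mp h
          simp [List.nil_perm] at this
  | cons y l ih =>
      intro l₂ hrel h
      have hY : f y ∈ l₂.map f := by
        have h1 : f y ∈ ((y :: l).map f : Multiset ℕ) := by simp
        rw [h] at h1
        exact_mod_cast h1
      obtain ⟨z, hz, hfz⟩ := List.mem_map.mp hY
      have hperm : l₂.Perm (z :: l₂.erase z) := List.perm_cons_erase hz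
      have h2 : ((l.map f : Multiset ℕ)) = (((l₂.erase z).map f : Multiset ℕ)) := by
        have h3 : ((y :: l).map f : Multiset ℕ) = ((z :: l₂.erase z).map f : Multiset ℕ) := by
          rw [h]
          exact_mod_cast Multiset.coe_eq_coe.mpr (hperm.map f)
        simp only [List.map_cons, Multiset.cons_coe] at h3
        rw [hfz.symm] at h3
        exact (Multiset.cons_inj_right _).mp h3
      have ihg := ih (l₂.erase z) (fun y' hy' z' hz' =>
        hrel y' (List.mem_cons_of_mem _ hy') z' (List.mem_of_mem_erase hz')) h2
      have hgz : g y = g z := hrel y (List.mem_cons_self) z hz hfz.symm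
      have h4 : ((l₂.map g : Multiset ℕ)) = ((z :: l₂.erase z).map g : Multiset ℕ) := by
        exact_mod_cast Multiset.coe_eq_coe.mpr (hperm.map g)
      rw [h4]
      show ((y :: l).map g : Multiset ℕ) = ((z :: l₂.erase z).map g : Multiset ℕ)
      simp only [List.map_cons, ← Multiset.cons_coe]
      rw [hgz, ihg]

section Reflect

variable (Mf : Tm) (a : ℕ → ℕ) (σ : ℕ → Proc)

lemma inst_comps (hσ : ∀ i, σ i = .pre (.inp (a i)) .nil) (U : Tm) :
    comps (inst σ U) = (tcomps U).map (inst σ) := by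
  induction U with
  | nil => rfl
  | pre η M ih => rfl
  | par M N ih1 ih2 => simp [inst, comps, tcomps, ih1, ih2]
  | var i => simp [inst, comps, tcomps, hσ i]

lemma mcode_inst (hσ : ∀ i, σ i = .pre (.inp (a i)) .nil) (U : Tm) :
    mcode (inst σ U) = ((tcomps U).map (fun Y => cdP (inst σ Y)) : Multiset ℕ) := by
  rw [mcode_comps, inst_comps a σ hσ, List.map_map]
  rfl

lemma mcode_inst_tbuild (hσ : ∀ i, σ i = .pre (.inp (a i)) .nil) {l : List Tm}
    (h : ∀ Y ∈ l, (∃ η B, Y = Tm.pre η B) ∨ (∃ i, Y = Tm.var i)) :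
    mcode (inst σ (tbuild l)) = (l.map (fun Y => cdP (inst σ Y)) : Multiset ℕ) := by
  induction l with
  | nil => simp [tbuild, inst, mcode]
  | cons Y l ih =>
      have hrest := ih (fun Z hZ => h Z (List.mem_cons_of_mem _ hZ))
      have hY : mcode (inst σ Y) = {cdP (inst σ Y)} := by
        rcases h Y (List.mem_cons_self) with ⟨η, B, rfl⟩ | ⟨i, rfl⟩
        · rfl
        · show mcode (σ i) = {cdP (σ i)}
          rw [hσ i]
          rfl
      show mcode (.par (inst σ Y) (inst σ (tbuild l))) = _
      rw [mcode_par, hY, hrest]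
      simp [Multiset.singleton_add]

lemma key_inj (hinj : ∀ i j, i ∈ tmVars Mf → j ∈ tmVars Mf → a i = a j → i = j)
    (hfresh : ∀ i, i ∈ tmVars Mf → a i ∉ tmNames Mf)
    (hσ : ∀ i, σ i = .pre (.inp (a i)) .nil) :
    ∀ (n : ℕ) (U V : Tm), U.tsize ≤ n → GoodT Mf U → GoodT Mf V →
      mcode (inst σ U) = mcode (inst σ V) → tmcode U = tmcode V := by
  intro n
  induction n with
  | zero =>
      intro U V hs hU hV h
      have hU0 : tcomps U = [] := tsize_zero_tcomps (Nat.le_zero.mp hs)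
      have h2 : ((tcomps V).map (fun Y => cdP (inst σ Y)) : Multiset ℕ) = 0 := by
        rw [← mcode_inst a σ hσ, ← h, mcode_inst a σ hσ, hU0]
        rfl
      have hV0 : tcomps V = [] := by
        cases hq : tcomps V with
        | nil => rfl
        | cons z t => rw [hq] at h2; simp at h2
      rw [tmcode_tcomps, tmcode_tcomps, hU0, hV0]
  | succ n ih =>
      intro U V hs hU hV h
      rw [tmcode_tcomps, tmcode_tcomps]
      refine map_transfer (fun Y => cdP (inst σ Y)) cdT (tcomps U) (tcomps V) ?_ ?_
      · intro y hy z hz hf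
        rcases tcomps_shape hy with ⟨η, B, rfl⟩ | ⟨i, rfl⟩
        · rcases tcomps_shape hz with ⟨η', B', rfl⟩ | ⟨j, rfl⟩
          · have hf' : cdP (.pre η (inst σ B)) = cdP (.pre η' (inst σ B')) := hf
            obtain ⟨rfl, hm⟩ := cdP_inj hf'
            have hts : B.tsize ≤ n := by
              have := tcomps_tsize_le hy
              simp only [Tm.tsize] at this
              omega
            have hrec := ih B B' hts (good_body (good_comp hU hy))
              (good_body (good_comp hV hz)) hm
            simp [cdT, hrec]
          · exfalso
            have hf' : cdP (.pre η (inst σ B)) = cdP (σ j) := hf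
            rw [hσ j] at hf'
            obtain ⟨heq, _⟩ := cdP_inj hf'
            have hjV : j ∈ tmVars Mf := hV.1 (tcomps_vars_sub hz rfl)
            have hname : η.name ∈ tmNames Mf := by
              apply hU.2
              apply tcomps_names_sub hy
              exact Set.mem_union_left _ rfl
            rw [heq] at hname
            exact hfresh j hjV hname
        · rcases tcomps_shape hz with ⟨η', B', rfl⟩ | ⟨j, rfl⟩
          · exfalso
            have hf' : cdP (σ i) = cdP (.pre η' (inst σ B')) := hf
            rw [hσ i] at hf'
            obtain ⟨heq, _⟩ := cdP_inj hf'
            have hiV : i ∈ tmVars Mf := hU.1 (tcomps_vars_sub hy rfl)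
            have hname : η'.name ∈ tmNames Mf := by
              apply hV.2
              apply tcomps_names_sub hz
              exact Set.mem_union_left _ rfl
            rw [← heq] at hname
            exact hfresh i hiV hname
          · have hf' : cdP (σ i) = cdP (σ j) := hf
            rw [hσ i, hσ j] at hf'
            obtain ⟨heq, _⟩ := cdP_inj hf'
            have haij : a i = a j := by injection heq
            have hij : i = j := hinj i j (hU.1 (tcomps_vars_sub hy rfl))
              (hV.1 (tcomps_vars_sub hz rfl)) haij
            rw [hij]
      · rw [← mcode_inst a σ hσ, ← mcode_inst a σ hσ]
        exact h

lemma reflect (hinj : ∀ i j, i ∈ tmVars Mf → j ∈ tmVars Mf → a i = a j → i = j)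
    (hfresh : ∀ i, i ∈ tmVars Mf → a i ∉ tmNames Mf)
    (hσ : ∀ i, σ i = .pre (.inp (a i)) .nil) :
    ∀ {P Q : Proc}, SRW2 P Q → ∀ N : Tm, GoodT Mf N →
      mcode P = mcode (inst σ N) → ∃ N', TmRW N N' := by
  intro P Q h
  induction h with
  | red η R S k hk ha _ =>
      intro N hGood hPN
      have hmN : mcode (inst σ N) = cdP (.pre η (.par R (pow (.pre η R) k))) ::ₘ mcode S := by
        rw [← hPN, sc_mcode ha, mcode_par, mcode_pre, Multiset.singleton_add]
      have hcmem : cdP (.pre η (.par R (pow (.pre η R) k)))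
          ∈ ((tcomps N).map (fun Y => cdP (inst σ Y)) : Multiset ℕ) := by
        rw [← mcode_inst a σ hσ, hmN]
        exact Multiset.mem_cons_self _ _
      have hcmem' : ∃ Y ∈ tcomps N,
          cdP (inst σ Y) = cdP (.pre η (.par R (pow (.pre η R) k))) := by
        have h5 : cdP (.pre η (.par R (pow (.pre η R) k)))
            ∈ (tcomps N).map (fun Y => cdP (inst σ Y)) := by exact_mod_cast hcmem
        simpa using List.mem_map.mp h5
      obtain ⟨Y₀, hY₀, hcd₀⟩ := hcmem'
      rcases tcomps_shape hY₀ with ⟨ηt, M₀, rfl⟩ | ⟨i, rfl⟩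
      · have hcd₀' : cdP (.pre ηt (inst σ M₀))
            = cdP (.pre η (.par R (pow (.pre η R) k))) := hcd₀
        obtain ⟨heq, hm0⟩ := cdP_inj hcd₀'
        subst heq
        have hm0' : ((tcomps M₀).map (fun Y => cdP (inst σ Y)) : Multiset ℕ)
            = mcode R + Multiset.replicate k (cdP (.pre ηt R)) := by
          rw [← mcode_inst a σ hσ, hm0, mcode_par, mcode_pow, mcode_pre,
            Multiset.nsmul_singleton]
        have hle : Multiset.replicate k (cdP (.pre ηt R))
            ≤ ((tcomps M₀).map (fun Y => cdP (inst σ Y)) : Multiset ℕ) := by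
          rw [hm0']
          exact Multiset.le_iff_exists_add.mpr ⟨mcode R, add_comm _ _⟩
        obtain ⟨l₁, l₂, hperm, hl₁, hl₂⟩ :=
          list_extract (fun Y => cdP (inst σ Y)) k (tcomps M₀) _ hle
        have goodM₀ : GoodT Mf M₀ := good_body (good_comp hGood hY₀)
        have memM₀ : ∀ Y, Y ∈ l₁ ++ l₂ → Y ∈ tcomps M₀ := fun Y hY => hperm.symm.subset hY
        have hshape : ∀ Y ∈ l₂, (∃ η B, Y = Tm.pre η B) ∨ (∃ i, Y = Tm.var i) :=
          fun Y hY => tcomps_shape (memM₀ Y (List.mem_append_right _ hY))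
        have hmRt : mcode (inst σ (tbuild l₂)) = mcode R := by
          rw [mcode_inst_tbuild a σ hσ hshape]
          have h6 := hl₂
          rw [hm0'] at h6
          have h5 : Multiset.replicate k (cdP (.pre ηt R)) + mcode R
              = Multiset.replicate k (cdP (.pre ηt R))
                + (l₂.map (fun Y => cdP (inst σ Y)) : Multiset ℕ) := by
            rw [← h6]
            exact add_comm _ _
          exact (add_left_cancel h5).symm
        have goodRt : GoodT Mf (tbuild l₂) :=
          good_tbuild (fun Y hY => good_comp goodM₀ (memM₀ Y (List.mem_append_right _ hY)))
        have hcopy : ∀ Y ∈ l₁, cdT Y = cdT (.pre ηt (tbuild l₂)) := by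
          intro Y hY
          have hfY : cdP (inst σ Y) = cdP (.pre ηt R) := by
            have h6 : cdP (inst σ Y) ∈ l₁.map (fun Y => cdP (inst σ Y)) :=
              List.mem_map_of_mem hY
            rw [hl₁] at h6
            exact List.eq_of_mem_replicate h6
          rcases tcomps_shape (memM₀ Y (List.mem_append_left _ hY)) with ⟨η₂, B₂, rfl⟩ | ⟨i, rfl⟩
          · have hfY' : cdP (.pre η₂ (inst σ B₂)) = cdP (.pre ηt R) := hfY
            obtain ⟨rfl, hmB⟩ := cdP_inj hfY'
            have h7 : mcode (inst σ B₂) = mcode (inst σ (tbuild l₂)) := by rw [hmB, hmRt]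
            have h8 := key_inj Mf a σ hinj hfresh hσ B₂.tsize B₂ (tbuild l₂) le_rfl
              (good_body (good_comp goodM₀ (memM₀ _ (List.mem_append_left _ hY)))) goodRt h7
            simp [cdT, h8]
          · exfalso
            have hfY2 : cdP (σ i) = cdP (.pre ηt R) := hfY
            rw [hσ i] at hfY2
            obtain ⟨heq2, _⟩ := cdP_inj hfY2
            have hiV : i ∈ tmVars Mf :=
              goodM₀.1 (tcomps_vars_sub (memM₀ _ (List.mem_append_left _ hY)) rfl)
            have hname : ηt.name ∈ tmNames Mf := by
              apply hGood.2
              apply tcomps_names_sub hY₀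
              exact Set.mem_union_left _ rfl
            rw [← heq2] at hname
            exact hfresh i hiV hname
        have hlen : l₁.length = k := by
          have := congrArg List.length hl₁
          simpa using this
        have hscM₀ : TmSC M₀ (.par (tbuild l₂) (tpow (.pre ηt (tbuild l₂)) k)) := by
          apply tm_sc
          rw [tmcode_tcomps M₀]
          have hperm2 : ((tcomps M₀).map cdT : Multiset ℕ) = (((l₁ ++ l₂)).map cdT : Multiset ℕ) := by
            exact_mod_cast Multiset.coe_eq_coe.mpr (hperm.map cdT)
          rw [hperm2]
          have hl₁' : (l₁.map cdT : Multiset ℕ)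
              = Multiset.replicate k (cdT (.pre ηt (tbuild l₂))) := by
            apply Multiset.eq_replicate.mpr
            constructor
            · simpa using hlen
            · intro b hb
              obtain ⟨Y, hY, rfl⟩ := List.mem_map.mp (by exact_mod_cast hb)
              exact hcopy Y hY
          have hsplit : (((l₁ ++ l₂).map cdT : List ℕ) : Multiset ℕ)
              = (l₁.map cdT : Multiset ℕ) + (l₂.map cdT : Multiset ℕ) := by
            rw [List.map_append]
            rfl
          rw [hsplit, hl₁', tmcode_par, tmcode_tpow, tmcode_pre, Multiset.nsmul_singleton,
            tmcode_tbuild hshape]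
          exact add_comm _ _
        refine ⟨.par (tpow (.pre ηt (tbuild l₂)) (k+1))
          (tbuild ((tcomps N).erase (.pre ηt M₀))), ?_⟩
        have hsplitN : TmSC N (.par (.pre ηt M₀) (tbuild ((tcomps N).erase (.pre ηt M₀)))) :=
          (tsc_tbuild_tcomps N).trans (tbuild_perm (List.perm_cons_erase hY₀))
        refine TmRW.congr hsplitN (TmRW.parL _ ?_) (TmSC.refl _)
        exact TmRW.congr (TmSC.pre ηt hscM₀) (TmRW.head hk) (TmSC.refl _)
      · exfalso
        have hcd₀2 : cdP (σ i) = cdP (.pre η (.par R (pow (.pre η R) k))) := hcd₀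
        rw [hσ i] at hcd₀2
        obtain ⟨_, hm0⟩ := cdP_inj hcd₀2
        have h9 : cdP (.pre η R) ∈ mcode (Proc.nil) := by
          rw [show mcode Proc.nil = mcode (.par R (pow (.pre η R) k)) from hm0,
            mcode_par, mcode_pow, mcode_pre, Multiset.nsmul_singleton]
          exact Multiset.mem_add.mpr (Or.inr (Multiset.mem_replicate.mpr ⟨by omega, rfl⟩))
        simp [mcode] at h9
  | comp η B B' S hBB' ha _ ih =>
      intro N hGood hPN
      have hmN : mcode (inst σ N) = cdP (.pre η B) ::ₘ mcode S := by
        rw [← hPN, sc_mcode ha, mcode_par, mcode_pre, Multiset.singleton_add]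
      have hcmem : cdP (.pre η B)
          ∈ ((tcomps N).map (fun Y => cdP (inst σ Y)) : Multiset ℕ) := by
        rw [← mcode_inst a σ hσ, hmN]
        exact Multiset.mem_cons_self _ _
      have hcmem' : ∃ Y ∈ tcomps N, cdP (inst σ Y) = cdP (.pre η B) := by
        have h5 : cdP (.pre η B) ∈ (tcomps N).map (fun Y => cdP (inst σ Y)) := by
          exact_mod_cast hcmem
        simpa using List.mem_map.mp h5
      obtain ⟨Y₀, hY₀, hcd₀⟩ := hcmem'
      rcases tcomps_shape hY₀ with ⟨ηt, M₀, rfl⟩ | ⟨i, rfl⟩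
      · have hcd₀' : cdP (.pre ηt (inst σ M₀)) = cdP (.pre η B) := hcd₀
        obtain ⟨heq, hm0⟩ := cdP_inj hcd₀'
        obtain ⟨M₀', hM₀'⟩ := ih M₀ (good_body (good_comp hGood hY₀)) hm0.symm
        have hsplitN : TmSC N (.par (.pre ηt M₀) (tbuild ((tcomps N).erase (.pre ηt M₀)))) :=
          (tsc_tbuild_tcomps N).trans (tbuild_perm (List.perm_cons_erase hY₀))
        exact ⟨_, TmRW.congr hsplitN (TmRW.parL _ (TmRW.pre ηt hM₀')) (TmSC.refl _)⟩
      · exfalso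
        have hcd₀2 : cdP (σ i) = cdP (.pre η B) := hcd₀
        rw [hσ i] at hcd₀2
        obtain ⟨_, hm0⟩ := cdP_inj hcd₀2
        exact srw2_mcode_ne hBB' hm0.symm

end Reflect

/-- substituting distinct fresh names `aᵢ.0` for the
    variables commutes with normalisation:
    `⌊M{aᵢ.0/Xᵢ}⌋ ≡ ⌊M⌋{aᵢ.0/Xᵢ}`. -/
theorem norm_subst_fresh (M : Tm) (a : ℕ → ℕ)
    (hinj : ∀ i j, i ∈ tmVars M → j ∈ tmVars M → a i = a j → i = j)
    (hfresh : ∀ i, i ∈ tmVars M → a i ∉ tmNames M)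
    (σ : ℕ → Proc) (hσ : ∀ i, σ i = .pre (.inp (a i)) .nil)
    (N : Tm) (hMN : TmRws M N) (hN : TmNF N)
    (A : Proc) (hA : Rws (inst σ M) A) (hAnf : NF A) :
    SC A (inst σ N) := by
  have goodN : GoodT M N := good_tmrws hMN
  have h1 : Rws (inst σ M) (inst σ N) := inst_tmrws σ hMN
  have h2 : NF (inst σ N) := by
    rintro ⟨Q, hQ⟩
    obtain ⟨N', hN'⟩ := reflect M a σ hinj hfresh hσ (rw_srw2 hQ) N goodN rfl
    exact hN ⟨N', hN'⟩
  exact unique_nf hA h1 hAnf h2
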